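/- Let E be a standard Borel measurable space, let l ≥ 1, let P be a probability measure on E^l, and let Q be a probability measure on E. For each k ∈ {1, …, l} let P_k be the k-th marginal of P, i.e., the pushforward of P under the k-th coordinate projection. Then D(P ‖ Q^{⊗l}) ≥ Σ_{k=1}^{l} D(P_k ‖ Q), where Q^{⊗l} is the l-fold product of Q. -/

import Mathlib

open MeasureTheory Real
open scoped ENNReal NNReal

section Aux
variable {E : Type*} [MeasurableSpace E]

lemma my_lintegral_pi_prod : ∀ (n : ℕ) (μ : Fin n → Measure E), (∀ i, SigmaFinite (μ i)) →
    ∀ (f : Fin n → E → ℝ≥0∞), (∀ i, Measurable (f i)) →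
    ∫⁻ x, ∏ i, f i (x i) ∂Measure.pi μ = ∏ i, ∫⁻ a, f i a ∂μ i := by
  intro n
  induction n with
  | zero =>
    intro μ _ f hf
    simp only [Finset.univ_eq_empty, Finset.prod_empty, lintegral_one]
    rw [← Set.pi_univ Set.univ, Measure.pi_pi]
    simp
  | succ n ih =>
    intro μ hσ f hf
    haveI := hσ
    have hg : Measurable (fun z : E × (Fin n → E) =>
        f 0 z.1 * ∏ j : Fin n, f ((0 : Fin (n+1)).succAbove j) (z.2 j)) := by
      refine (((hf 0).comp measurable_fst).mul ?_)
      exact Finset.measurable_prod _ fun j _ =>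
        (hf _).comp ((measurable_pi_apply j).comp measurable_snd)
    have key := (measurePreserving_piFinSuccAbove μ 0).lintegral_comp hg
    have heq : ∀ x : Fin (n+1) → E,
        (fun z : E × (Fin n → E) =>
          f 0 z.1 * ∏ j : Fin n, f ((0 : Fin (n+1)).succAbove j) (z.2 j))
          (MeasurableEquiv.piFinSuccAbove (fun _ => E) 0 x) = ∏ i, f i (x i) := by
      intro x
      rw [Fin.prod_univ_succAbove (fun i => f i (x i)) 0]
      rfl
    calc ∫⁻ x, ∏ i, f i (x i) ∂Measure.pi μ
        = ∫⁻ z, f 0 z.1 * ∏ j : Fin n, f ((0 : Fin (n+1)).succAbove j) (z.2 j)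
            ∂((μ 0).prod (Measure.pi fun j => μ ((0 : Fin (n+1)).succAbove j))) := by
          rw [← key]; exact lintegral_congr fun x => (heq x).symm
      _ = (∫⁻ a, f 0 a ∂μ 0) * ∏ j : Fin n, ∫⁻ a, f ((0 : Fin (n+1)).succAbove j) a
            ∂μ ((0 : Fin (n+1)).succAbove j) := by
          rw [lintegral_prod_mul (f := f 0)
            (g := fun y : Fin n → E => ∏ j : Fin n, f ((0 : Fin (n+1)).succAbove j) (y j))
            ((hf 0).aemeasurable)
            (Finset.measurable_prod _ fun j _ => (hf _).comp (measurable_pi_apply j)).aemeasurable]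
          rw [ih _ (fun j => inferInstance) _ (fun j => hf _)]
      _ = ∏ i, ∫⁻ a, f i a ∂μ i :=
          (Fin.prod_univ_succAbove (fun i => ∫⁻ a, f i a ∂μ i) 0).symm

end Aux

section Aux2
variable {E : Type*} [MeasurableSpace E]

lemma my_pi_map_eval (n : ℕ) (μ : Fin n → Measure E) [∀ i, IsProbabilityMeasure (μ i)]
    (k : Fin n) : (Measure.pi μ).map (fun x => x k) = μ k := by
  ext s hs
  rw [Measure.map_apply (measurable_pi_apply k) hs]
  have h1 : (fun (x : Fin n → E) => x k) ⁻¹' s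
      = Set.pi Set.univ (Function.update (fun _ => Set.univ) k s) := Set.eval_preimage
  rw [h1, Measure.pi_pi]
  rw [Fintype.prod_eq_single k (fun j hj => by
    rw [Function.update_of_ne hj]; exact measure_univ)]
  rw [Function.update_self]

lemma my_pi_withDensity (n : ℕ) (Q : Measure E) [IsProbabilityMeasure Q]
    (P : Fin n → Measure E) [∀ i, IsProbabilityMeasure (P i)]
    (hPQ : ∀ i, P i ≪ Q) :
    Measure.pi P = (Measure.pi fun _ : Fin n => Q).withDensity
      (fun x => ∏ i, (P i).rnDeriv Q (x i)) := by
  set f : Fin n → E → ℝ≥0∞ := fun i => (P i).rnDeriv Q with hf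
  have hfm : ∀ i, Measurable (f i) := fun i => Measure.measurable_rnDeriv _ _
  refine Measure.pi_eq fun s hs => ?_
  rw [withDensity_apply _ (MeasurableSet.univ_pi hs)]
  have h1 : ∫⁻ x in Set.pi Set.univ s, ∏ i, f i (x i) ∂(Measure.pi fun _ : Fin n => Q)
      = ∫⁻ x, ∏ i, (s i).indicator (f i) (x i) ∂(Measure.pi fun _ : Fin n => Q) := by
    rw [← lintegral_indicator (MeasurableSet.univ_pi hs) _]
    refine lintegral_congr fun x => ?_
    by_cases hx : x ∈ Set.pi Set.univ s
    · rw [Set.indicator_of_mem hx]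
      exact Finset.prod_congr rfl fun i _ =>
        (Set.indicator_of_mem (hx i (Set.mem_univ i)) _).symm
    · rw [Set.indicator_of_notMem hx]
      rw [Set.mem_univ_pi] at hx
      push_neg at hx
      obtain ⟨i, hi⟩ := hx
      exact (Finset.prod_eq_zero (Finset.mem_univ i)
        (Set.indicator_of_notMem hi _)).symm
  rw [h1, my_lintegral_pi_prod n _ (fun _ => inferInstance) _
    (fun i => (hfm i).indicator (hs i))]
  exact Finset.prod_congr rfl fun i _ => by
    rw [lintegral_indicator (hs i) _, ← withDensity_apply _ (hs i),
      Measure.withDensity_rnDeriv_eq _ _ (hPQ i)]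
end Aux2

section Aux3
variable {α : Type*} [MeasurableSpace α] {μ ν : Measure α}

lemma my_integrable_neg_part_llr [IsProbabilityMeasure μ] [IsProbabilityMeasure ν]
    (hμν : μ ≪ ν) : Integrable (fun x => max (- llr μ ν x) 0) μ := by
  have hb : Integrable (fun x => (ν.rnDeriv μ x).toReal) μ :=
    Measure.integrable_toReal_rnDeriv
  refine hb.mono' (((measurable_llr _ _).neg.max measurable_const).aestronglyMeasurable) ?_
  filter_upwards [exp_neg_llr hμν] with x hx
  rw [Real.norm_eq_abs, abs_of_nonneg (le_max_right _ _), ← hx]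
  exact max_le
    (le_trans (le_add_of_nonneg_right one_pos.le) (Real.add_one_le_exp _)) (Real.exp_pos _).le

lemma my_integral_llr_nonneg [IsProbabilityMeasure μ] [IsProbabilityMeasure ν]
    (hμν : μ ≪ ν) (h : Integrable (llr μ ν) μ) : 0 ≤ ∫ x, llr μ ν x ∂μ := by
  have hb : Integrable (fun x => (ν.rnDeriv μ x).toReal) μ :=
    Measure.integrable_toReal_rnDeriv
  have h1 : ∫ x, - llr μ ν x ∂μ ≤ ∫ x, ((ν.rnDeriv μ x).toReal - 1) ∂μ := by
    refine integral_mono_ae h.neg (hb.sub (integrable_const 1)) ?_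
    filter_upwards [Measure.rnDeriv_pos' hμν, Measure.rnDeriv_lt_top ν μ,
      neg_llr hμν] with x h0 hlt hneg
    calc - llr μ ν x = llr ν μ x := hneg
      _ = Real.log (ν.rnDeriv μ x).toReal := rfl
      _ ≤ (ν.rnDeriv μ x).toReal - 1 :=
          Real.log_le_sub_one_of_pos (ENNReal.toReal_pos h0.ne' hlt.ne)
  have h2 : ∫ x, (ν.rnDeriv μ x).toReal ∂μ ≤ 1 := by
    rw [integral_toReal (Measure.measurable_rnDeriv ν μ).aemeasurable
      (Measure.rnDeriv_lt_top ν μ)]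
    calc (∫⁻ x, ν.rnDeriv μ x ∂μ).toReal ≤ (ν Set.univ).toReal :=
          ENNReal.toReal_mono (measure_ne_top _ _) Measure.lintegral_rnDeriv_le
      _ = 1 := by simp
  rw [integral_neg] at h1
  rw [integral_sub hb (integrable_const 1)] at h1
  simp only [integral_const, measure_univ, probReal_univ, ENNReal.toReal_one, smul_eq_mul, one_mul] at h1
  linarith

lemma my_sum_le_aux {ι : Type*} [DecidableEq ι] (s : Finset ι) (t : ι → ℝ) {i : ι} (hi : i ∈ s) :
    t i ≤ (∑ j ∈ s, t j) + ∑ j ∈ s, max (- t j) 0 := by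
  have h1 : ∑ j ∈ s.erase i, (- max (- t j) 0) ≤ ∑ j ∈ s.erase i, t j :=
    Finset.sum_le_sum fun j _ => by
      rw [neg_le]; exact le_max_left _ _
  have h2 : ∑ j ∈ s.erase i, max (- t j) 0 ≤ ∑ j ∈ s, max (- t j) 0 :=
    Finset.sum_le_sum_of_subset_of_nonneg (Finset.erase_subset _ _)
      fun j _ _ => le_max_right _ _
  have h3 : t i + ∑ j ∈ s.erase i, t j = ∑ j ∈ s, t j :=
    Finset.add_sum_erase s t hi
  rw [Finset.sum_neg_distrib] at h1
  linarith
end Aux3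


open scoped Classical in
/-- Kullback-Leibler divergence: the integral of `log (dm/dn)` with respect to `m`
if `m` is absolutely continuous w.r.t. `n` and the log-density is `m`-integrable,
and infinity otherwise. -/
noncomputable def klDiv {α : Type*} [MeasurableSpace α] (μ ν : Measure α) : ℝ≥0∞ :=
  if μ ≪ ν ∧ Integrable (fun x => log (μ.rnDeriv ν x).toReal) μ then
    ENNReal.ofReal (∫ x, log (μ.rnDeriv ν x).toReal ∂μ)
  else ⊤

/-- Superadditivity of Kullback-Leibler divergence with respect to a product reference
measure: the divergence of `P` from the `l`-fold product `Q^l` is at least the sum of the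
divergences of the marginals of `P` from `Q`. -/
theorem sum_klDiv_marginal_le {E : Type*} [MeasurableSpace E] [StandardBorelSpace E]
    (l : ℕ) (hl : 1 ≤ l) (P : Measure (Fin l → E)) (Q : Measure E)
    [IsProbabilityMeasure P] [IsProbabilityMeasure Q] :
    ∑ k : Fin l, klDiv (P.map (fun f => f k)) Q ≤
      klDiv P (Measure.pi (fun _ : Fin l => Q)) := by
  classical
  set QL : Measure (Fin l → E) := Measure.pi (fun _ : Fin l => Q) with hQLdef
  by_cases hc : P ≪ QL ∧ Integrable (fun x => log (P.rnDeriv QL x).toReal) P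
  case neg => rw [klDiv, if_neg hc]; exact le_top
  obtain ⟨hPQ, hSint'⟩ := hc
  have hSint : Integrable (llr P QL) P := hSint'
  set Pk : Fin l → Measure E := fun k => P.map (fun x => x k) with hPkdef
  have hPkeq : ∀ k : Fin l, Pk k = P.map (fun x => x k) := fun k => rfl
  haveI hPkprob : ∀ k, IsProbabilityMeasure (Pk k) := fun k => by
    rw [hPkeq k]; exact Measure.isProbabilityMeasure_map (measurable_pi_apply k).aemeasurable
  have hmapQ : ∀ k : Fin l, QL.map (fun x => x k) = Q := fun k => my_pi_map_eval l _ k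
  have hPkQ : ∀ k, Pk k ≪ Q := fun k => by
    rw [hPkeq k, ← hmapQ k]; exact hPQ.map (measurable_pi_apply k)
  set f : Fin l → E → ℝ≥0∞ := fun k => (Pk k).rnDeriv Q with hfdef
  have hfm : ∀ k, Measurable (f k) := fun k => Measure.measurable_rnDeriv _ _
  set F : (Fin l → E) → ℝ≥0∞ := fun x => ∏ k, f k (x k) with hFdef
  have hFm : Measurable F :=
    Finset.measurable_prod _ fun k _ => (hfm k).comp (measurable_pi_apply k)
  set R : Measure (Fin l → E) := Measure.pi Pk with hRdef
  haveI : IsProbabilityMeasure R := by rw [hRdef]; infer_instance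
  have hRQL : R = QL.withDensity F := my_pi_withDensity l Q Pk hPkQ
  -- positivity and finiteness of the marginal densities, pulled back to `P`
  have hposf : ∀ k : Fin l, ∀ᵐ x ∂P, 0 < f k (x k) := by
    intro k
    have h : ∀ᵐ y ∂(Pk k), 0 < f k y := Measure.rnDeriv_pos (hPkQ k)
    rw [hPkeq k] at h
    exact (ae_map_iff (measurable_pi_apply k).aemeasurable
      (measurableSet_lt measurable_const (hfm k))).mp h
  have hfinf : ∀ k : Fin l, ∀ᵐ x ∂P, f k (x k) < ∞ := by
    intro k
    have h : ∀ᵐ y ∂(Pk k), f k y < ∞ :=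
      (hPkQ k).ae_le (Measure.rnDeriv_lt_top (Pk k) Q)
    rw [hPkeq k] at h
    exact (ae_map_iff (measurable_pi_apply k).aemeasurable
      (measurableSet_lt (hfm k) measurable_const)).mp h
  -- `P` is absolutely continuous w.r.t. the product of its marginals
  have hFpos : ∀ᵐ x ∂P, F x ≠ 0 := by
    filter_upwards [ae_all_iff.mpr hposf] with x hx
    exact Finset.prod_ne_zero_iff.mpr fun k _ => (hx k).ne'
  have hPR : P ≪ R := by
    refine Measure.AbsolutelyContinuous.mk fun A hA h0 => ?_
    rw [hRQL, withDensity_apply _ hA] at h0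
    have hA0 : ∀ᵐ x ∂QL, x ∈ A → F x = 0 :=
      (ae_restrict_iff' hA).mp ((lintegral_eq_zero_iff hFm).mp h0)
    rw [measure_eq_zero_iff_ae_notMem]
    filter_upwards [hPQ.ae_le hA0, hFpos] with x h1 h2
    exact fun hxA => h2 (h1 hxA)
  -- the chain rule for Radon-Nikodym derivatives
  have hchain : ∀ᵐ x ∂P, P.rnDeriv QL x = P.rnDeriv R x * F x := by
    have h1 := Measure.rnDeriv_mul_rnDeriv (κ := QL) hPR
    have h2 : R.rnDeriv QL =ᵐ[QL] F := by
      rw [hRQL]; exact Measure.rnDeriv_withDensity QL hFm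
    filter_upwards [hPQ.ae_le h1, hPQ.ae_le h2] with x hx1 hx2
    rw [← hx1, Pi.mul_apply, hx2]
  -- the a.e. decomposition of the log-likelihood ratio
  have hae : llr P QL =ᵐ[P] fun x => llr P R x + ∑ k, llr (Pk k) Q (x k) := by
    filter_upwards [hchain, Measure.rnDeriv_pos hPR,
      hPR.ae_le (Measure.rnDeriv_lt_top P R), ae_all_iff.mpr hposf,
      ae_all_iff.mpr hfinf] with x hx hp hfin hp2 hf2
    have ha : (P.rnDeriv R x).toReal ≠ 0 := (ENNReal.toReal_pos hp.ne' hfin.ne).ne'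
    have hb : ∀ k : Fin l, (f k (x k)).toReal ≠ 0 :=
      fun k => (ENNReal.toReal_pos (hp2 k).ne' (hf2 k).ne).ne'
    have hFx : (F x).toReal = ∏ k, (f k (x k)).toReal := ENNReal.toReal_prod _ _
    simp only [llr]
    rw [hx, ENNReal.toReal_mul, hFx,
      Real.log_mul ha (Finset.prod_ne_zero_iff.mpr fun k _ => hb k),
      Real.log_prod fun k _ => hb k]
  -- integrability of the pieces
  have hNg : Integrable (fun x => max (- llr P R x) 0) P :=
    my_integrable_neg_part_llr hPR
  have hNk : ∀ k : Fin l, Integrable (fun x => max (- llr (Pk k) Q (x k)) 0) P := by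
    intro k
    have h1 : Integrable (fun y => max (- llr (Pk k) Q y) 0) (Pk k) :=
      my_integrable_neg_part_llr (hPkQ k)
    rw [hPkeq k] at h1
    exact (integrable_map_measure
      (((measurable_llr _ _).neg.max measurable_const).aestronglyMeasurable)
      (measurable_pi_apply k).aemeasurable).mp h1
  have hN : Integrable
      (fun x => max (- llr P R x) 0 + ∑ k, max (- llr (Pk k) Q (x k)) 0) P :=
    hNg.add (integrable_finset_sum _ fun k _ => hNk k)
  have hgint : Integrable (llr P R) P := by
    refine (hSint.abs.add hN).mono' (measurable_llr _ _).aestronglyMeasurable ?_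
    filter_upwards [hae] with x hx
    have h1 : - llr P R x ≤ max (- llr P R x) 0 := le_max_left _ _
    have h2 : (0 : ℝ) ≤ ∑ k, max (- llr (Pk k) Q (x k)) 0 :=
      Finset.sum_nonneg fun k _ => le_max_right _ _
    have h3 : ∑ k, (- max (- llr (Pk k) Q (x k)) 0) ≤ ∑ k, llr (Pk k) Q (x k) :=
      Finset.sum_le_sum fun k _ => by rw [neg_le]; exact le_max_left _ _
    rw [Finset.sum_neg_distrib] at h3
    have h4 : llr P QL x = llr P R x + ∑ k, llr (Pk k) Q (x k) := hx
    have h5 := le_abs_self (llr P QL x)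
    have h6 := neg_abs_le (llr P QL x)
    have h7 : (0 : ℝ) ≤ max (- llr P R x) 0 := le_max_right _ _
    rw [Real.norm_eq_abs, abs_le]
    constructor
    · simp only [Pi.add_apply, Pi.abs_apply]
      linarith
    · simp only [Pi.add_apply, Pi.abs_apply]
      linarith
  have hhint : ∀ k : Fin l, Integrable (fun x => llr (Pk k) Q (x k)) P := by
    intro k
    refine (hSint.abs.add hN).mono'
      (((measurable_llr _ _).comp (measurable_pi_apply k)).aestronglyMeasurable) ?_
    filter_upwards [hae] with x hx
    have h4 : llr P QL x = llr P R x + ∑ j, llr (Pk j) Q (x j) := hx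
    have haux := my_sum_le_aux Finset.univ (fun j => llr (Pk j) Q (x j))
      (Finset.mem_univ k)
    have h1 : - llr P R x ≤ max (- llr P R x) 0 := le_max_left _ _
    have h1' : (0 : ℝ) ≤ max (- llr P R x) 0 := le_max_right _ _
    have h2 : max (- llr (Pk k) Q (x k)) 0 ≤ ∑ j, max (- llr (Pk j) Q (x j)) 0 :=
      Finset.single_le_sum (f := fun j : Fin l => max (- llr (Pk j) Q (x j)) 0)
        (fun j _ => le_max_right _ _) (Finset.mem_univ k)
    have h2' : - llr (Pk k) Q (x k) ≤ max (- llr (Pk k) Q (x k)) 0 := le_max_left _ _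
    have h5 := le_abs_self (llr P QL x)
    have h6 := neg_abs_le (llr P QL x)
    rw [Real.norm_eq_abs, abs_le]
    constructor
    · simp only [Pi.add_apply, Pi.abs_apply]
      have h3 : (0 : ℝ) ≤ ∑ j, max (- llr (Pk j) Q (x j)) 0 :=
        Finset.sum_nonneg fun j _ => le_max_right _ _
      linarith
    · simp only [Pi.add_apply, Pi.abs_apply]
      linarith
  -- transferring the marginal integrals
  have hmargint : ∀ k : Fin l, Integrable (llr (Pk k) Q) (Pk k) := by
    intro k
    rw [hPkeq k]
    exact (integrable_map_measure (measurable_llr _ _).aestronglyMeasurable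
      (measurable_pi_apply k).aemeasurable).mpr (hhint k)
  have hmargeq : ∀ k : Fin l,
      ∫ y, llr (Pk k) Q y ∂(Pk k) = ∫ x, llr (Pk k) Q (x k) ∂P := by
    intro k
    rw [hPkeq k]
    exact integral_map (measurable_pi_apply k).aemeasurable
      (measurable_llr _ _).aestronglyMeasurable
  -- the integral identity and nonnegativity
  have hint_eq : ∫ x, llr P QL x ∂P
      = ∫ x, llr P R x ∂P + ∑ k, ∫ x, llr (Pk k) Q (x k) ∂P := by
    rw [integral_congr_ae hae,
      integral_add hgint (integrable_finset_sum _ fun k _ => hhint k),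
      integral_finset_sum _ fun k _ => hhint k]
  have hgnonneg : 0 ≤ ∫ x, llr P R x ∂P := my_integral_llr_nonneg hPR hgint
  have hknonneg : ∀ k : Fin l, 0 ≤ ∫ x, llr (Pk k) Q (x k) ∂P := fun k => by
    rw [← hmargeq k]; exact my_integral_llr_nonneg (hPkQ k) (hmargint k)
  -- final computation
  have hfinal : ∑ k : Fin l, klDiv (Pk k) Q ≤ klDiv P QL := by
    calc ∑ k : Fin l, klDiv (Pk k) Q
        = ∑ k : Fin l, ENNReal.ofReal (∫ x, llr (Pk k) Q (x k) ∂P) := by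
          refine Finset.sum_congr rfl fun k _ => ?_
          rw [klDiv, if_pos ⟨hPkQ k, hmargint k⟩]
          show ENNReal.ofReal (∫ y, llr (Pk k) Q y ∂(Pk k)) = _
          rw [hmargeq k]
      _ = ENNReal.ofReal (∑ k, ∫ x, llr (Pk k) Q (x k) ∂P) :=
          (ENNReal.ofReal_sum_of_nonneg fun k _ => hknonneg k).symm
      _ ≤ ENNReal.ofReal (∫ x, llr P QL x ∂P) := by
          rw [hint_eq]
          exact ENNReal.ofReal_le_ofReal (by linarith)
      _ = klDiv P QL := by
          rw [klDiv, if_pos ⟨hPQ, hSint⟩]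
          rfl
  exact hfinal
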